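/- Let k ≥ 3 and let G be a graph on n ≥ 2^{2k} vertices. Then either G contains no induced k-vertex subgraph with an odd number of edges, or G contains at least C(n,k)/(2^{2k²+1} k² n²) induced k-vertex subgraphs with an odd number of edges. -/

import Mathlib

open scoped Classical

/-- Number of edges of the subgraph of `G` induced by the vertex set `U`. -/
noncomputable def inducedEdges {V : Type*} (G : SimpleGraph V) (U : Finset V) : ℕ :=
  Nat.card {e : Sym2 V // e ∈ G.edgeSet ∧ ∀ v ∈ e, v ∈ U}

set_option linter.unusedSectionVars false

section OddAux

variable {V : Type*} [Fintype V] [DecidableEq V] (G : SimpleGraph V)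

/-- Adjacency indicator in `ZMod 2`. -/
noncomputable def aa (u v : V) : ZMod 2 := if G.Adj u v then 1 else 0

/-- Parity of the number of induced edges. -/
noncomputable def PP (X : Finset V) : ZMod 2 := (inducedEdges G X : ZMod 2)

lemma aa_comm (u v : V) : aa G u v = aa G v u := by simp [aa, G.adj_comm]

lemma aa_self (u : V) : aa G u u = 0 := by simp [aa]

lemma htwo : ∀ x : ZMod 2, x + x = 0 := by decide

lemma inducedEdges_eq_card (U : Finset V) :
    inducedEdges G U = (Finset.univ.filter
      (fun e : Sym2 V => e ∈ G.edgeSet ∧ ∀ v ∈ e, v ∈ U)).card := by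
  rw [inducedEdges, Nat.card_eq_fintype_card, Fintype.card_subtype]

lemma inducedEdges_insert {U : Finset V} {u : V} (hu : u ∉ U) :
    inducedEdges G (insert u U) =
      inducedEdges G U + (U.filter (fun w => G.Adj u w)).card := by
  rw [inducedEdges_eq_card, inducedEdges_eq_card]
  rw [← Finset.card_filter_add_card_filter_not (p := fun e : Sym2 V => u ∈ e)
    (s := Finset.univ.filter (fun e : Sym2 V => e ∈ G.edgeSet ∧ ∀ v ∈ e, v ∈ insert u U))]
  rw [add_comm]
  congr 1
  · -- edges not containing u
    congr 1
    ext e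
    induction e with
    | _ x y =>
      simp only [Finset.mem_filter, Finset.mem_univ, true_and, Sym2.mem_iff,
        Finset.mem_insert]
      constructor
      · rintro ⟨⟨he, hv⟩, hne⟩
        refine ⟨he, ?_⟩
        intro v hv'
        rcases hv v hv' with h | h
        · exact absurd (by cases hv' <;> simp_all) hne
        · exact h
      · rintro ⟨he, hv⟩
        refine ⟨⟨he, fun v hv' => Or.inr (hv v hv')⟩, ?_⟩
        rintro (rfl | rfl) <;> exact hu (by simp_all)
  · -- edges containing u ↔ neighbors of u in U
    refine (Finset.card_bij (fun w _ => s(u, w)) ?_ ?_ ?_).symm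
    · intro w hw
      simp only [Finset.mem_filter, Finset.mem_univ, true_and] at hw ⊢
      obtain ⟨hwU, hadj⟩ := hw
      refine ⟨⟨hadj, ?_⟩, by simp⟩
      intro v hv
      rw [Sym2.mem_iff] at hv
      rcases hv with rfl | rfl
      · exact Finset.mem_insert_self _ _
      · exact Finset.mem_insert_of_mem hwU
    · intro w1 h1 w2 h2 he
      exact Sym2.congr_right.mp he
    · intro e he
      simp only [Finset.mem_filter, Finset.mem_univ, true_and] at he
      obtain ⟨⟨he1, he2⟩, hue⟩ := he
      induction e with
      | _ x y =>
        rw [Sym2.mem_iff] at hue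
        have hxy : G.Adj x y := he1
        rcases hue with rfl | rfl
        · have hyU : y ∈ U := by
            have := he2 y (by simp)
            rcases Finset.mem_insert.mp this with rfl | h
            · exact absurd hxy (G.irrefl)
            · exact h
          exact ⟨y, Finset.mem_filter.mpr ⟨hyU, hxy⟩, rfl⟩
        · have hxU : x ∈ U := by
            have := he2 x (by simp)
            rcases Finset.mem_insert.mp this with rfl | h
            · exact absurd hxy (G.irrefl)
            · exact h
          exact ⟨x, Finset.mem_filter.mpr ⟨hxU, hxy.symm⟩, Sym2.eq_swap⟩

lemma PP_insert {U : Finset V} {u : V} (hu : u ∉ U) :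
    PP G (insert u U) = PP G U + ∑ s ∈ U, aa G u s := by
  rw [PP, PP, inducedEdges_insert G hu]
  push_cast
  congr 1
  rw [Finset.card_filter]
  push_cast
  exact Finset.sum_congr rfl (fun s _ => by simp [aa])

lemma PP_swap {X : Finset V} {u v : V} (hu : u ∈ X) (hv : v ∉ X) :
    PP G (insert v (X.erase u)) = PP G X + (∑ s ∈ X, (aa G u s + aa G v s)) + aa G u v := by
  have h1 : PP G X = PP G (X.erase u) + ∑ s ∈ X.erase u, aa G u s := by
    conv_lhs => rw [← Finset.insert_erase hu]
    exact PP_insert G (Finset.notMem_erase u X)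
  have h2 : PP G (insert v (X.erase u)) = PP G (X.erase u) + ∑ s ∈ X.erase u, aa G v s :=
    PP_insert G (fun h => hv (Finset.mem_of_mem_erase h))
  have hsum_u : ∑ s ∈ X.erase u, aa G u s = ∑ s ∈ X, aa G u s :=
    Finset.sum_erase X (aa_self G u)
  have hsum_v : aa G v u + ∑ s ∈ X.erase u, aa G v s = ∑ s ∈ X, aa G v s :=
    Finset.add_sum_erase X _ hu
  rw [Finset.sum_add_distrib, h2, h1, ← hsum_u, ← hsum_v, aa_comm G v u]
  generalize PP G (X.erase u) = p at *
  generalize ∑ s ∈ X.erase u, aa G u s = su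
  generalize ∑ s ∈ X.erase u, aa G v s = sv
  linear_combination -htwo su - htwo (aa G u v)

lemma swap_card {W : Finset V} {u v : V} (hu : u ∈ W) (hv : v ∉ W) :
    (insert v (W.erase u)).card = W.card := by
  rw [Finset.card_insert_of_notMem (fun h => hv (Finset.mem_of_mem_erase h)),
    Finset.card_erase_of_mem hu]
  have : 1 ≤ W.card := Finset.card_pos.mpr ⟨u, hu⟩
  omega

/-- If the parity of induced-edge counts is constant on all `k`-sets within two swaps
of `W`, then it is constant on all `k`-sets. -/
lemma flat (W : Finset V)
    (h : ∀ Y : Finset V, Y.card = W.card → (Y \ W).card ≤ 2 → PP G Y = PP G W) :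
    ∀ Y : Finset V, Y.card = W.card → PP G Y = PP G W := by
  have H1 : ∀ u ∈ W, ∀ v ∉ W,
      (∑ s ∈ W, (aa G u s + aa G v s)) + aa G u v = 0 := by
    intro u hu v hv
    have hswap := PP_swap G hu hv
    have hd : ((insert v (W.erase u)) \ W).card ≤ 2 := by
      refine le_trans (Finset.card_le_card (fun x hx => ?_)) (by simp : ({v} : Finset V).card ≤ 2)
      rcases Finset.mem_sdiff.mp hx with ⟨hx1, hx2⟩
      rcases Finset.mem_insert.mp hx1 with rfl | hx3
      · exact Finset.mem_singleton_self _
      · exact absurd (Finset.mem_of_mem_erase hx3) hx2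
    have := h _ (swap_card hu hv) hd
    rw [hswap, add_assoc] at this
    exact add_eq_left.mp this
  have H2 : ∀ u1 ∈ W, ∀ u2 ∈ W, u2 ≠ u1 → ∀ v1, v1 ∉ W → ∀ v2, v2 ∉ W → v2 ≠ v1 →
      aa G u2 u1 + aa G v2 u1 + aa G u2 v1 + aa G v2 v1 = 0 := by
    intro u1 hu1 u2 hu2 hne v1 hv1 v2 hv2 hnev
    set W1 := insert v1 (W.erase u1) with hW1
    have hu2W1 : u2 ∈ W1 := Finset.mem_insert_of_mem (Finset.mem_erase.mpr ⟨hne, hu2⟩)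
    have hv2W1 : v2 ∉ W1 := by
      intro hmem
      rcases Finset.mem_insert.mp hmem with rfl | hmem
      · exact hnev rfl
      · exact hv2 (Finset.mem_of_mem_erase hmem)
    have hswap2 := PP_swap G hu2W1 hv2W1
    have hW1card : W1.card = W.card := swap_card hu1 hv1
    have hW1dist : (W1 \ W).card ≤ 2 := by
      refine le_trans (Finset.card_le_card (fun x hx => ?_)) (by simp : ({v1} : Finset V).card ≤ 2)
      rcases Finset.mem_sdiff.mp hx with ⟨hx1, hx2⟩
      rcases Finset.mem_insert.mp hx1 with rfl | hx3
      · exact Finset.mem_singleton_self _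
      · exact absurd (Finset.mem_of_mem_erase hx3) hx2
    have hPPW1 : PP G W1 = PP G W := h _ hW1card hW1dist
    have hW2card : (insert v2 (W1.erase u2)).card = W.card := by
      rw [swap_card hu2W1 hv2W1, hW1card]
    have hW2dist : ((insert v2 (W1.erase u2)) \ W).card ≤ 2 := by
      refine le_trans (Finset.card_le_card (fun x hx => ?_))
        (Finset.card_insert_le v2 {v1} |>.trans (by simp))
      rcases Finset.mem_sdiff.mp hx with ⟨hx1, hx2⟩
      rcases Finset.mem_insert.mp hx1 with rfl | hx3
      · exact Finset.mem_insert_self _ _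
      · rcases Finset.mem_insert.mp (Finset.mem_of_mem_erase hx3) with rfl | hx4
        · exact Finset.mem_insert_of_mem (Finset.mem_singleton_self _)
        · exact absurd (Finset.mem_of_mem_erase hx4) hx2
    have hPPW2 : PP G (insert v2 (W1.erase u2)) = PP G W := h _ hW2card hW2dist
    have hv1e : v1 ∉ W.erase u1 := fun h' => hv1 (Finset.mem_of_mem_erase h')
    have hsum1 : ∑ s ∈ W1, (aa G u2 s + aa G v2 s)
        = (aa G u2 v1 + aa G v2 v1) + ∑ s ∈ W.erase u1, (aa G u2 s + aa G v2 s) :=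
      Finset.sum_insert hv1e
    have hsum2 : (aa G u2 u1 + aa G v2 u1) + ∑ s ∈ W.erase u1, (aa G u2 s + aa G v2 s)
        = ∑ s ∈ W, (aa G u2 s + aa G v2 s) :=
      Finset.add_sum_erase W (fun s => aa G u2 s + aa G v2 s) hu1
    have hH1 := H1 u2 hu2 v2 hv2
    rw [hPPW2, hPPW1, hsum1] at hswap2
    linear_combination -hswap2 + hsum2 + hH1
      - htwo (∑ s ∈ W.erase u1, (aa G u2 s + aa G v2 s)) - htwo (aa G u2 v2)
  have key : ∀ m : ℕ, ∀ Y : Finset V, Y.card = W.card → (Y \ W).card = m → PP G Y = PP G W := by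
    intro m
    induction m with
    | zero =>
      intro Y hYc hYd
      have : Y = W := Finset.eq_of_subset_of_card_le
        ((Finset.sdiff_eq_empty_iff_subset.mp (Finset.card_eq_zero.mp hYd))) (le_of_eq hYc.symm)
      rw [this]
    | succ m ih =>
      intro Y hYc hYd
      have hvex : ∃ v, v ∈ Y \ W := Finset.card_pos.mp (by omega) |>.imp (fun v hv => hv)
      obtain ⟨v, hv⟩ := hvex
      have hvY : v ∈ Y := (Finset.mem_sdiff.mp hv).1
      have hvW : v ∉ W := (Finset.mem_sdiff.mp hv).2
      have hWYcard : (W \ Y).card = m + 1 := by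
        rw [Finset.card_sdiff_comm hYc.symm, hYd]
      obtain ⟨u, hu⟩ : ∃ u, u ∈ W \ Y := Finset.card_pos.mp (by omega) |>.imp (fun u hu => hu)
      have huW : u ∈ W := (Finset.mem_sdiff.mp hu).1
      have huY : u ∉ Y := (Finset.mem_sdiff.mp hu).2
      set Y' := insert u (Y.erase v) with hY'
      have hY'c : Y'.card = W.card := by
        rw [hY', Finset.card_insert_of_notMem (fun h' => huY (Finset.mem_of_mem_erase h')),
          Finset.card_erase_of_mem hvY]
        have : 1 ≤ Y.card := Finset.card_pos.mpr ⟨v, hvY⟩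
        omega
      have hY'd : Y' \ W = (Y \ W).erase v := by
        ext x
        simp only [hY', Finset.mem_sdiff, Finset.mem_insert, Finset.mem_erase]
        constructor
        · rintro ⟨rfl | ⟨hx1, hx2⟩, hx3⟩
          · exact absurd huW hx3
          · exact ⟨hx1, hx2, hx3⟩
        · rintro ⟨hx1, hx2, hx3⟩
          exact ⟨Or.inr ⟨hx1, hx2⟩, hx3⟩
      have hPPY' : PP G Y' = PP G W := by
        apply ih Y' hY'c
        rw [hY'd, Finset.card_erase_of_mem hv, hYd]
        omega
      have huY'mem : u ∈ Y' := Finset.mem_insert_self _ _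
      have hvY'not : v ∉ Y' := by
        intro hmem
        rcases Finset.mem_insert.mp hmem with rfl | hmem
        · exact hvW huW
        · exact (Finset.notMem_erase v Y) hmem
      have hYeq : insert v (Y'.erase u) = Y := by
        rw [hY', Finset.erase_insert (fun h' => huY (Finset.mem_of_mem_erase h')),
          Finset.insert_erase hvY]
      have hswap := PP_swap G huY'mem hvY'not
      rw [hYeq, hPPY'] at hswap
      have hkey : ∑ s ∈ Y', (aa G u s + aa G v s) = aa G u v := by
        have hsplitY' : ∑ s ∈ Y' ∩ W, (aa G u s + aa G v s) + ∑ s ∈ Y' \ W, (aa G u s + aa G v s)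
            = ∑ s ∈ Y', (aa G u s + aa G v s) := Finset.sum_inter_add_sum_sdiff _ _ _
        have hsplitW : ∑ s ∈ W ∩ Y', (aa G u s + aa G v s) + ∑ s ∈ W \ Y', (aa G u s + aa G v s)
            = ∑ s ∈ W, (aa G u s + aa G v s) := Finset.sum_inter_add_sum_sdiff _ _ _
        have hIC : W ∩ Y' = Y' ∩ W := Finset.inter_comm _ _
        rw [hIC] at hsplitW
        have hH1uv := H1 u huW v hvW
        have hcards : (Y' \ W).card = (W \ Y').card := Finset.card_sdiff_comm hY'c
        have e := Finset.equivOfCardEq hcards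
        have hpair : ∑ s ∈ W \ Y', (aa G u s + aa G v s)
            = ∑ j : (Y' \ W : Finset V), (aa G u (e j : V) + aa G v (e j : V)) := by
          rw [← Finset.sum_coe_sort (W \ Y')]
          exact (Equiv.sum_comp e _).symm
        have hzero : ∑ j : (Y' \ W : Finset V),
            ((aa G u (e j : V) + aa G v (e j : V)) + (aa G u (j : V) + aa G v (j : V))) = 0 := by
          apply Finset.sum_eq_zero
          intro j _
          have hw1 : (e j : V) ∈ W \ Y' := (e j).2
          have hj1 : (j : V) ∈ Y' \ W := j.2
          have hwW : (e j : V) ∈ W := (Finset.mem_sdiff.mp hw1).1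
          have hwY' : (e j : V) ∉ Y' := (Finset.mem_sdiff.mp hw1).2
          have hjW : (j : V) ∉ W := (Finset.mem_sdiff.mp hj1).2
          have hjY' : (j : V) ∈ Y' := (Finset.mem_sdiff.mp hj1).1
          have hune : u ≠ (e j : V) := fun h' => hwY' (h' ▸ huY'mem)
          have hvne : v ≠ (j : V) := fun h' => hvY'not (h' ▸ hjY')
          have := H2 (e j : V) hwW u huW hune (j : V) hjW v hvW hvne
          linear_combination this
        have hsumdiff : ∑ s ∈ Y' \ W, (aa G u s + aa G v s)
            = ∑ j : (Y' \ W : Finset V), (aa G u (j : V) + aa G v (j : V)) :=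
          (Finset.sum_coe_sort _ _).symm
        have hadd : ∑ j : (Y' \ W : Finset V),
            ((aa G u (e j : V) + aa G v (e j : V)) + (aa G u (j : V) + aa G v (j : V)))
            = ∑ j : (Y' \ W : Finset V), (aa G u (e j : V) + aa G v (e j : V))
              + ∑ j : (Y' \ W : Finset V), (aa G u (j : V) + aa G v (j : V)) :=
          Finset.sum_add_distrib
        have hzero' : ∑ j : (Y' \ W : Finset V), (aa G u (e j : V) + aa G v (e j : V))
            + ∑ j : (Y' \ W : Finset V), (aa G u (j : V) + aa G v (j : V)) = 0 :=
          hadd ▸ hzero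
        linear_combination - hsplitY' + hsplitW + hH1uv - hpair - hzero' + hsumdiff
          - htwo (aa G u v) + htwo (∑ j : (Y' \ W : Finset V), (aa G u (j : V) + aa G v (j : V)))
      rw [hkey] at hswap
      rw [hswap]
      linear_combination htwo (aa G u v)
  intro Y hYc
  exact key (Y \ W).card Y hYc rfl

lemma PP_eq_zero_iff (X : Finset V) : PP G X = 0 ↔ Even (inducedEdges G X) := by
  rw [PP, Nat.even_iff, ← Nat.dvd_iff_mod_eq_zero, ← ZMod.natCast_eq_zero_iff]

end OddAux

lemma pow_le2_card {V : Type*} [DecidableEq V] (s : Finset V) :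
    (s.powerset.filter (fun t => t.card ≤ 2)).card ≤ s.card ^ 2 + s.card + 1 := by
  have hsub : s.powerset.filter (fun t => t.card ≤ 2) ⊆
      s.powersetCard 0 ∪ s.powersetCard 1 ∪ s.powersetCard 2 := by
    intro t ht
    rw [Finset.mem_filter, Finset.mem_powerset] at ht
    simp only [Finset.mem_union, Finset.mem_powersetCard]
    have h2 := ht.2
    rcases Nat.lt_or_ge t.card 1 with h | h
    · exact Or.inl (Or.inl ⟨ht.1, by omega⟩)
    · rcases Nat.lt_or_ge t.card 2 with h' | h'
      · exact Or.inl (Or.inr ⟨ht.1, by omega⟩)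
      · exact Or.inr ⟨ht.1, by omega⟩
  calc (s.powerset.filter (fun t => t.card ≤ 2)).card
      ≤ (s.powersetCard 0 ∪ s.powersetCard 1 ∪ s.powersetCard 2).card :=
        Finset.card_le_card hsub
    _ ≤ (s.powersetCard 0).card + (s.powersetCard 1).card + (s.powersetCard 2).card := by
        refine le_trans (Finset.card_union_le _ _) ?_
        exact Nat.add_le_add_right (Finset.card_union_le (s.powersetCard 0) (s.powersetCard 1)) _
    _ = s.card.choose 0 + s.card.choose 1 + s.card.choose 2 := by
        rw [Finset.card_powersetCard, Finset.card_powersetCard, Finset.card_powersetCard]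
    _ ≤ s.card ^ 2 + s.card + 1 := by
        rw [Nat.choose_zero_right, Nat.choose_one_right, Nat.choose_two_right]
        have h1 : s.card * (s.card - 1) / 2 ≤ s.card * s.card :=
          le_trans (Nat.div_le_self _ _) (Nat.mul_le_mul_left _ (Nat.sub_le _ _))
        nlinarith [sq_nonneg s.card]

lemma sdiff_recover {V : Type*} [DecidableEq V] (A B : Finset V) :
    (B \ (B \ A)) ∪ (A \ B) = A := by
  ext x
  simp only [Finset.mem_union, Finset.mem_sdiff]
  tauto

theorem stmt_10 {V : Type*} [Fintype V] [DecidableEq V] (G : SimpleGraph V) (k : ℕ)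
    (hk : 3 ≤ k) (hn : 2 ^ (2 * k) ≤ Fintype.card V) :
    Nat.card {W : Finset V // W.card = k ∧ Odd (inducedEdges G W)} = 0 ∨
      ((Fintype.card V).choose k : ℝ) /
          ((2 : ℝ) ^ (2 * k ^ 2 + 1) * (k : ℝ) ^ 2 * (Fintype.card V : ℝ) ^ 2) ≤
        (Nat.card {W : Finset V // W.card = k ∧ Odd (inducedEdges G W)} : ℝ) := by
  by_cases hN : Nat.card {W : Finset V // W.card = k ∧ Odd (inducedEdges G W)} = 0
  · exact Or.inl hN
  right
  set n := Fintype.card V with hn_def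
  have hn64 : 64 ≤ n := le_trans (by
    calc (64 : ℕ) = 2 ^ 6 := by norm_num
      _ ≤ 2 ^ (2 * k) := Nat.pow_le_pow_right (by norm_num) (by omega)) hn
  have hNcard : Nat.card {W : Finset V // W.card = k ∧ Odd (inducedEdges G W)}
      = (Finset.univ.filter (fun W : Finset V => W.card = k ∧ Odd (inducedEdges G W))).card := by
    rw [Nat.card_eq_fintype_card, Fintype.card_subtype]
  set Sodd := Finset.univ.filter (fun W : Finset V => W.card = k ∧ Odd (inducedEdges G W))
    with hSodd_def
  set Sall := Finset.univ.filter (fun W : Finset V => W.card = k) with hSall_def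
  have hSoddpos : 0 < Sodd.card := by
    rw [hNcard] at hN
    exact Nat.pos_of_ne_zero hN
  obtain ⟨W₀, hW₀mem⟩ := Finset.card_pos.mp hSoddpos
  obtain ⟨hW₀k, hW₀odd⟩ := (Finset.mem_filter.mp hW₀mem).2
  -- the key structural claim
  have claim : ∀ W : Finset V, ∃ W', W.card = k →
      ((W'.card = k ∧ Odd (inducedEdges G W')) ∧ (W' \ W).card ≤ 2) := by
    intro W
    by_cases hWk : W.card = k
    swap
    · exact ⟨∅, fun h => absurd h hWk⟩
    by_contra hcon
    push_neg at hcon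
    have hcon' : ∀ W' : Finset V, W'.card = k → (W' \ W).card ≤ 2 →
        ¬ Odd (inducedEdges G W') := by
      intro W' h1 h2 hodd
      have := (hcon W').2 ⟨h1, hodd⟩
      omega
    have hPPW : PP G W = 0 := by
      rw [PP_eq_zero_iff]
      rw [← Nat.not_odd_iff_even]
      exact hcon' W hWk (by simp)
    have hflat := flat G W (fun Y hYc hYd => by
      rw [hPPW, PP_eq_zero_iff, ← Nat.not_odd_iff_even]
      exact hcon' Y (hYc.trans hWk) hYd)
    have := hflat W₀ (hW₀k.trans hWk.symm)
    rw [hPPW, PP_eq_zero_iff, ← Nat.not_odd_iff_even] at this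
    exact this hW₀odd
  choose f hf using claim
  -- counting: Sall is covered by fibers over Sodd
  have hfmem : ∀ W ∈ Sall, f W ∈ Sodd := by
    intro W hW
    have hWk := (Finset.mem_filter.mp hW).2
    exact Finset.mem_filter.mpr ⟨Finset.mem_univ _, (hf W hWk).1⟩
  have hsub : Sall ⊆ Sodd.biUnion (fun W' => Sall.filter (fun W => f W = W')) := by
    intro W hW
    exact Finset.mem_biUnion.mpr ⟨f W, hfmem W hW, Finset.mem_filter.mpr ⟨hW, rfl⟩⟩
  have hfiber : ∀ W' ∈ Sodd,
      (Sall.filter (fun W => f W = W')).card ≤ (k ^ 2 + k + 1) * (n ^ 2 + n + 1) := by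
    intro W' hW'
    have hW'k : W'.card = k := (Finset.mem_filter.mp hW').2.1
    have hmaps : ∀ W ∈ Sall.filter (fun W => f W = W'),
        (W' \ W, W \ W') ∈
          (W'.powerset.filter (fun t => t.card ≤ 2)) ×ˢ
          ((Finset.univ : Finset V).powerset.filter (fun t => t.card ≤ 2)) := by
      intro W hW
      obtain ⟨hW1, hW2⟩ := Finset.mem_filter.mp hW
      have hWk : W.card = k := (Finset.mem_filter.mp hW1).2
      have hd : (W' \ W).card ≤ 2 := hW2 ▸ (hf W hWk).2
      have hd' : (W \ W').card ≤ 2 := by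
        rw [Finset.card_sdiff_comm (hWk.trans hW'k.symm)]
        exact hd
      refine Finset.mem_product.mpr ⟨?_, ?_⟩
      · exact Finset.mem_filter.mpr ⟨Finset.mem_powerset.mpr (Finset.sdiff_subset), hd⟩
      · exact Finset.mem_filter.mpr ⟨Finset.mem_powerset.mpr (Finset.subset_univ _), hd'⟩
    have hinj : Set.InjOn (fun W => (W' \ W, W \ W'))
        (Sall.filter (fun W => f W = W') : Set (Finset V)) := by
      intro W1 _ W2 _ heq
      simp only [Prod.mk.injEq] at heq
      have h1 := sdiff_recover W1 W'
      have h2 := sdiff_recover W2 W'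
      rw [heq.1, heq.2] at h1
      exact h1.symm.trans h2
    calc (Sall.filter (fun W => f W = W')).card
        ≤ ((W'.powerset.filter (fun t => t.card ≤ 2)) ×ˢ
            ((Finset.univ : Finset V).powerset.filter (fun t => t.card ≤ 2))).card :=
          Finset.card_le_card_of_injOn _ hmaps hinj
      _ = (W'.powerset.filter (fun t => t.card ≤ 2)).card *
            ((Finset.univ : Finset V).powerset.filter (fun t => t.card ≤ 2)).card :=
          Finset.card_product _ _
      _ ≤ (k ^ 2 + k + 1) * (n ^ 2 + n + 1) := by
          apply Nat.mul_le_mul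
          · have := pow_le2_card W'
            rwa [hW'k] at this
          · have := pow_le2_card (Finset.univ : Finset V)
            rwa [Finset.card_univ, ← hn_def] at this
  have hall : Sall.card = n.choose k := by
    rw [hSall_def, ← Finset.powerset_univ, ← Finset.powersetCard_eq_filter,
      Finset.card_powersetCard, Finset.card_univ]
  have hcount : n.choose k ≤ Sodd.card * ((k ^ 2 + k + 1) * (n ^ 2 + n + 1)) := by
    calc n.choose k = Sall.card := hall.symm
      _ ≤ (Sodd.biUnion (fun W' => Sall.filter (fun W => f W = W'))).card :=
          Finset.card_le_card hsub
      _ ≤ ∑ W' ∈ Sodd, (Sall.filter (fun W => f W = W')).card := Finset.card_biUnion_le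
      _ ≤ Sodd.card * ((k ^ 2 + k + 1) * (n ^ 2 + n + 1)) := by
          exact Finset.sum_le_card_nsmul _ _ _ hfiber
  -- final real arithmetic
  rw [hNcard]
  have hkR : (3 : ℝ) ≤ (k : ℝ) := by exact_mod_cast hk
  have hnR : (64 : ℝ) ≤ (n : ℝ) := by exact_mod_cast hn64
  have hden : (0 : ℝ) < (2 : ℝ) ^ (2 * k ^ 2 + 1) * (k : ℝ) ^ 2 * (n : ℝ) ^ 2 := by
    positivity
  rw [div_le_iff₀ hden]
  have hcountR : (n.choose k : ℝ) ≤
      (Sodd.card : ℝ) * (((k : ℝ) ^ 2 + k + 1) * ((n : ℝ) ^ 2 + n + 1)) := by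
    exact_mod_cast hcount
  have e1 : ((k : ℝ) ^ 2 + k + 1) ≤ 2 * (k : ℝ) ^ 2 := by nlinarith
  have e2 : ((n : ℝ) ^ 2 + n + 1) ≤ 2 * (n : ℝ) ^ 2 := by nlinarith
  have e3 : (4 : ℝ) ≤ (2 : ℝ) ^ (2 * k ^ 2 + 1) := by
    calc (4 : ℝ) = 2 ^ 2 := by norm_num
      _ ≤ (2 : ℝ) ^ (2 * k ^ 2 + 1) := by
          apply pow_le_pow_right₀ (by norm_num)
          nlinarith [sq_nonneg k, hk]
  have hprod : ((k : ℝ) ^ 2 + k + 1) * ((n : ℝ) ^ 2 + n + 1) ≤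
      (2 : ℝ) ^ (2 * k ^ 2 + 1) * (k : ℝ) ^ 2 * (n : ℝ) ^ 2 := by
    have h4 : ((k : ℝ) ^ 2 + k + 1) * ((n : ℝ) ^ 2 + n + 1) ≤ (2 * (k:ℝ)^2) * (2 * (n:ℝ)^2) :=
      mul_le_mul e1 e2 (by positivity) (by positivity)
    calc ((k : ℝ) ^ 2 + k + 1) * ((n : ℝ) ^ 2 + n + 1) ≤ 4 * ((k:ℝ)^2 * (n:ℝ)^2) := by
          nlinarith
      _ ≤ (2 : ℝ) ^ (2 * k ^ 2 + 1) * (k : ℝ) ^ 2 * (n : ℝ) ^ 2 := by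
          rw [mul_assoc]
          exact mul_le_mul_of_nonneg_right e3 (by positivity)
  calc (n.choose k : ℝ)
      ≤ (Sodd.card : ℝ) * (((k : ℝ) ^ 2 + k + 1) * ((n : ℝ) ^ 2 + n + 1)) := hcountR
    _ ≤ (Sodd.card : ℝ) * ((2 : ℝ) ^ (2 * k ^ 2 + 1) * (k : ℝ) ^ 2 * (n : ℝ) ^ 2) :=
        mul_le_mul_of_nonneg_left hprod (by positivity)
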